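/- Let D be a digraph on a finite vertex type V with |V| = n in which no two vertices are joined by arcs in both directions (for all u ≠ v, not both u → v and v → u). Let σ : Fin n ≃ V be an ordering of the vertices and suppose i+1 < n and σ(i+1) → σ(i) is an arc of D. Let τ be the ordering obtained from σ by swapping positions i and i+1 (τ = σ ∘ Equiv.swap i (i+1)). Then the feedback arc set of τ has strictly smaller cardinality than the feedback arc set of σ. -/

import Mathlib

open scoped Classical

/-- The feedback arc set of the digraph `adj` with respect to the vertex ordering `σ`:
all arcs `(σ j, σ i)` with `σ j → σ i` and `i < j`. -/
noncomputable def feedbackArcSet {V : Type*} [Fintype V] (adj : V → V → Prop)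
    {n : ℕ} (σ : Fin n ≃ V) : Finset (V × V) :=
  Finset.univ.filter fun p : V × V => adj p.1 p.2 ∧ σ.symm p.2 < σ.symm p.1

lemma swap_adjacent_lt {n : ℕ} (i i' : Fin n) (h : (i' : ℕ) = (i : ℕ) + 1)
    (j k : Fin n) (h1 : ¬ (k = i ∧ j = i')) (h2 : ¬ (k = i' ∧ j = i)) :
    (Equiv.swap i i' k < Equiv.swap i i' j ↔ k < j) := by
  rw [Equiv.swap_apply_def, Equiv.swap_apply_def]
  split_ifs <;> simp only [Fin.lt_def, Fin.ext_iff, not_and] at * <;> omega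

/-- If `σ (i+1) → σ i` is an arc, then swapping positions `i` and `i+1` in the ordering
strictly decreases the size of the feedback arc set. -/
theorem feedbackArcSet_card_lt_of_swap {V : Type*} [Fintype V]
    (adj : V → V → Prop) (hirr : ∀ v : V, ¬ adj v v)
    (hno2 : ∀ u v : V, u ≠ v → ¬ (adj u v ∧ adj v u))
    {n : ℕ} (hn : Fintype.card V = n) (σ : Fin n ≃ V)
    (i : Fin n) (hi : (i : ℕ) + 1 < n)
    (harc : adj (σ ⟨(i : ℕ) + 1, hi⟩) (σ i)) :
    (feedbackArcSet adj ((Equiv.swap i ⟨(i : ℕ) + 1, hi⟩).trans σ)).card <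
      (feedbackArcSet adj σ).card := by
  set i' : Fin n := ⟨(i : ℕ) + 1, hi⟩ with hi'
  have hii' : i ≠ i' := by simp [hi', Fin.ext_iff]
  have hab : σ i' ≠ σ i := fun h => hii' (σ.injective h).symm
  have hlt : i < i' := by simp [hi', Fin.lt_def]
  have hnadj : ¬ adj (σ i) (σ i') := fun h => hno2 _ _ hab.symm ⟨h, harc⟩
  have key : feedbackArcSet adj ((Equiv.swap i i').trans σ)
      = (feedbackArcSet adj σ).erase (σ i', σ i) := by
    ext p
    obtain ⟨u, v⟩ := p
    simp only [feedbackArcSet, Finset.mem_erase, Finset.mem_filter, Finset.mem_univ,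
      true_and]
    simp only [Equiv.symm_trans_apply, Equiv.symm_swap]
    have hu : σ (σ.symm u) = u := σ.apply_symm_apply u
    have hv : σ (σ.symm v) = v := σ.apply_symm_apply v
    constructor
    · rintro ⟨hadj, hord⟩
      have h1 : ¬ (σ.symm v = i ∧ σ.symm u = i') := by
        rintro ⟨hk, hj⟩
        rw [hk, hj, Equiv.swap_apply_left, Equiv.swap_apply_right] at hord
        exact absurd hord (not_lt.2 hlt.le)
      have h2 : ¬ (σ.symm v = i' ∧ σ.symm u = i) := by
        rintro ⟨hk, hj⟩
        apply hnadj
        have hu' : u = σ i := by rw [← hj, hu]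
        have hv' : v = σ i' := by rw [← hk, hv]
        rwa [hu', hv'] at hadj
      refine ⟨fun h3 => ?_, hadj,
        (swap_adjacent_lt i i' rfl (σ.symm u) (σ.symm v) h1 h2).1 hord⟩
      obtain ⟨h3, h4⟩ := Prod.mk.injEq .. ▸ h3
      exact h1 ⟨by rw [h4]; simp, by rw [h3]; simp⟩
    · rintro ⟨hne, hadj, hord⟩
      refine ⟨hadj, ?_⟩
      have h1 : ¬ (σ.symm v = i ∧ σ.symm u = i') := by
        rintro ⟨hk, hj⟩
        exact hne (Prod.ext (by rw [← hj, hu]) (by rw [← hk, hv]))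
      have h2 : ¬ (σ.symm v = i' ∧ σ.symm u = i) := by
        rintro ⟨hk, hj⟩
        rw [hk, hj] at hord
        exact absurd hord (not_lt.2 hlt.le)
      exact (swap_adjacent_lt i i' rfl (σ.symm u) (σ.symm v) h1 h2).2 hord
  rw [key]
  have hmem : (σ i', σ i) ∈ feedbackArcSet adj σ := by
    simp [feedbackArcSet, harc, hlt]
  exact Finset.card_erase_lt_of_mem hmem
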